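/- Let u, v be natural numbers with u, v ≥ 3 and 1/u + 1/v < 1/2, set w = u, and let A := b(u,v,u)⁻¹. Then for every real h > 0, the point H := (e₀ + e₃) + h·(e₁ + e₂) on the half-turn axis satisfies ⟨H, H⟩ < 0; that is, every such point of the axis h = F₀₃F₁₂ is a proper (interior) point. -/

import Mathlib

open Real Matrix

/-- The Coxeter–Schläfli matrix `b(u,v,w)` of the orthoscheme. -/
noncomputable def CSMatrix (u v w : ℕ) : Matrix (Fin 4) (Fin 4) ℝ :=
  !![1, -Real.cos (Real.pi / u), 0, 0;
     -Real.cos (Real.pi / u), 1, -Real.cos (Real.pi / v), 0;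
     0, -Real.cos (Real.pi / v), 1, -Real.cos (Real.pi / w);
     0, 0, -Real.cos (Real.pi / w), 1]

/-- `A := b(u,v,w)⁻¹`. -/
noncomputable def Ainv (u v w : ℕ) : Matrix (Fin 4) (Fin 4) ℝ := (CSMatrix u v w)⁻¹

/-- The point scalar product `⟨x,y⟩ := xᵀ A y` with `A = b(u,v,w)⁻¹`. -/
noncomputable def ip (u v w : ℕ) (x y : Fin 4 → ℝ) : ℝ := x ⬝ᵥ (Ainv u v w).mulVec y

/-- The standard basis vector `e_i` of `ℝ⁴`. -/
noncomputable def e (i : Fin 4) : Fin 4 → ℝ := Pi.single i 1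

/-- Generic symmetric tridiagonal matrix of the orthoscheme with `w = u`. -/
noncomputable def Baux (a c : ℝ) : Matrix (Fin 4) (Fin 4) ℝ :=
  !![1, -a, 0, 0; -a, 1, -c, 0; 0, -c, 1, -a; 0, 0, -a, 1]

lemma Baux_det (a c : ℝ) : (Baux a c).det = (1 - a ^ 2) ^ 2 - c ^ 2 := by
  simp [Baux, Matrix.det_succ_row_zero, Fin.sum_univ_succ, Matrix.det_fin_three,
    Fin.succAbove]
  ring

lemma Baux_mulVec (a c h t : ℝ) (hD : 1 - c - a ^ 2 ≠ 0) (ht : t = (h + a) / (1 - c - a ^ 2)) :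
    (Baux a c).mulVec ![1 + a * t, t, t, 1 + a * t] = ![1, h, h, 1] := by
  subst ht
  funext i
  fin_cases i <;>
    simp [Baux, Matrix.mulVec, dotProduct, Fin.sum_univ_four] <;>
    field_simp <;> ring

set_option maxHeartbeats 1000000 in
theorem axis_points_proper (u v : ℕ) (hu : 3 ≤ u) (hv : 3 ≤ v)
    (huv : (1 : ℝ) / u + 1 / v < 1 / 2) :
    ∀ h : ℝ, 0 < h →
      ip u v u ((e 0 + e 3) + h • (e 1 + e 2)) ((e 0 + e 3) + h • (e 1 + e 2)) < 0 := by
  intro h hpos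
  have hπ := Real.pi_pos
  have hu3 : (3:ℝ) ≤ (u:ℝ) := by exact_mod_cast hu
  have hv3 : (3:ℝ) ≤ (v:ℝ) := by exact_mod_cast hv
  have hu0 : (0:ℝ) < u := by linarith
  have hv0 : (0:ℝ) < v := by linarith
  set a : ℝ := Real.cos (Real.pi / u) with ha_def
  set c : ℝ := Real.cos (Real.pi / v) with hc_def
  set s : ℝ := Real.sin (Real.pi / u) with hs_def
  have hπu0 : 0 < Real.pi / u := div_pos hπ hu0
  have hπv0 : 0 < Real.pi / v := div_pos hπ hv0
  have hπu3 : Real.pi / u ≤ Real.pi / 3 :=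
    div_le_div_of_nonneg_left (le_of_lt hπ) (by norm_num) hu3
  have hπu2 : Real.pi / u < Real.pi / 2 := lt_of_le_of_lt hπu3 (by
    apply div_lt_div_of_pos_left hπ (by norm_num) (by norm_num))
  have ha : 0 < a := Real.cos_pos_of_mem_Ioo ⟨by linarith, hπu2⟩
  have hs0 : 0 < s := Real.sin_pos_of_pos_of_lt_pi hπu0 (by linarith)
  have hpyth : s ^ 2 + a ^ 2 = 1 := Real.sin_sq_add_cos_sq _
  have hs1 : s < 1 := by nlinarith
  have key : Real.pi / u + Real.pi / v < Real.pi / 2 := by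
    have := (mul_lt_mul_iff_right₀ hπ).mpr huv
    rw [mul_add, mul_one_div, mul_one_div, mul_one_div] at this
    exact this
  have hsc : s < c := by
    have h1 : Real.pi / v < Real.pi / 2 - Real.pi / u := by linarith
    have h2 : Real.cos (Real.pi / 2 - Real.pi / u) < c :=
      Real.cos_lt_cos_of_nonneg_of_le_pi (le_of_lt hπv0) (by linarith) h1
    rwa [Real.cos_pi_div_two_sub] at h2
  have hc1 : c ≤ 1 := Real.cos_le_one _
  have hD : 1 - c - a ^ 2 < 0 := by nlinarith
  have hDne : 1 - c - a ^ 2 ≠ 0 := ne_of_lt hD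
  have hCS : CSMatrix u v u = Baux a c := rfl
  have hdetne : (CSMatrix u v u).det ≠ 0 := by
    rw [hCS, Baux_det]
    nlinarith
  set t : ℝ := (h + a) / (1 - c - a ^ 2) with ht_def
  set y : Fin 4 → ℝ := ![1 + a * t, t, t, 1 + a * t] with hy_def
  have hH : ((e 0 + e 3) + h • (e 1 + e 2)) = ![1, h, h, 1] := by
    funext i
    fin_cases i <;> simp [e, Pi.single_apply]
  have hby : (CSMatrix u v u).mulVec y = ![1, h, h, 1] := by
    rw [hCS]
    exact Baux_mulVec a c h t hDne ht_def
  have hinv : (Ainv u v u).mulVec ![1, h, h, 1] = y := by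
    rw [← hby, Ainv, Matrix.mulVec_mulVec,
      Matrix.nonsing_inv_mul _ (isUnit_iff_ne_zero.mpr hdetne), Matrix.one_mulVec]
  have hip : ip u v u ((e 0 + e 3) + h • (e 1 + e 2)) ((e 0 + e 3) + h • (e 1 + e 2))
      = 2 + 2 * (h + a) * t := by
    rw [ip, hH, hinv]
    simp [hy_def, dotProduct, Fin.sum_univ_four]
    ring
  rw [hip]
  have htD : t * (1 - c - a ^ 2) = h + a := by
    rw [ht_def]; field_simp
  have hval : (2 + 2 * (h + a) * t) * (1 - c - a ^ 2)
      = 2 * (1 - c - a ^ 2) + 2 * (h + a) ^ 2 := by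
    linear_combination (2 * (h + a)) * htD
  have hpos2 : 0 < 2 * (1 - c - a ^ 2) + 2 * (h + a) ^ 2 := by
    nlinarith [mul_pos hpos ha, sq_nonneg h]
  nlinarith [hval, hpos2, hD]
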